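/- arXiv:2603.22801 — 2 statements merged into one kernel-verified Lean document; each statement's English description precedes it below -/
import Mathlib

section
/- Let x₁ ~ N(0,a), x₂ ~ N(0,b), x₃ ~ N(0,c) be three independent centered Gaussians with a,b,c > 0. Then E[x₁·x₂·1_{x₁ ≥ 0}·1_{x₁+x₂+x₃ ≥ 0}] = b·√(a(b+c))/(2π(a+b+c)). -/
open MeasureTheory ProbabilityTheory Real Set Filter
open scoped NNReal ENNReal Topology

section GaussianF5Helpers

lemma gF5_integral_gaussianReal {v : ℝ≥0} (hv : v ≠ 0) (f : ℝ → ℝ) :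
    ∫ x, f x ∂(gaussianReal 0 v) = ∫ x, gaussianPDFReal 0 v x * f x := by
  rw [gaussianReal_of_var_ne_zero _ hv]
  have hm : Measurable fun x => (gaussianPDFReal 0 v x).toNNReal :=
    (measurable_gaussianPDFReal 0 v).real_toNNReal
  have h1 : volume.withDensity (gaussianPDF 0 v)
      = volume.withDensity fun x => ((gaussianPDFReal 0 v x).toNNReal : ℝ≥0∞) := rfl
  rw [h1, integral_withDensity_eq_integral_smul hm]
  congr 1; ext x
  simp [NNReal.smul_def, Real.coe_toNNReal _ (gaussianPDFReal_nonneg 0 v x)]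


lemma gF5_integrable_mul_pdf {v : ℝ≥0} (hv : 0 < v) :
    Integrable (fun y : ℝ => y * gaussianPDFReal 0 v y) := by
  have hv' : (0:ℝ) < v := hv
  have h := (integrable_mul_exp_neg_mul_sq
    (show (0:ℝ) < (2*(v:ℝ))⁻¹ by positivity)).const_mul ((Real.sqrt (2*π*(v:ℝ)))⁻¹)
  convert h using 2 with y
  simp only [gaussianPDFReal, sub_zero]
  rw [show -y^2/(2*(v:ℝ)) = -(2*(v:ℝ))⁻¹ * y^2 by ring]
  ring

lemma gF5_integrable_id {v : ℝ≥0} (hv : 0 < v) :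
    Integrable (fun x : ℝ => x) (gaussianReal 0 v) := by
  rw [gaussianReal_of_var_ne_zero _ hv.ne']
  have h1 : gaussianPDF 0 v = fun x => ((gaussianPDFReal 0 v x).toNNReal : ℝ≥0∞) := rfl
  rw [h1, integrable_withDensity_iff_integrable_smul
    ((measurable_gaussianPDFReal 0 v).real_toNNReal)]
  have h2 : (fun x : ℝ => (gaussianPDFReal 0 v x).toNNReal • x)
      = fun x : ℝ => x * gaussianPDFReal 0 v x := by
    ext x
    simp [NNReal.smul_def, Real.coe_toNNReal _ (gaussianPDFReal_nonneg 0 v x), mul_comm]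
  rw [h2]; exact gF5_integrable_mul_pdf hv

lemma gF5_pdf_even (v : ℝ≥0) (y : ℝ) :
    gaussianPDFReal 0 v (-y) = gaussianPDFReal 0 v y := by
  simp only [gaussianPDFReal, sub_zero, neg_sq]

lemma gF5_intB {v : ℝ≥0} (hv : 0 < v) (t : ℝ) :
    ∫ y in Ici t, y * gaussianPDFReal 0 v y = (v:ℝ) * gaussianPDFReal 0 v t := by
  have hv' : (0:ℝ) < v := hv
  rw [integral_Ici_eq_integral_Ioi]
  have hd : ∀ y ∈ Ioi t, HasDerivAt (fun y => -(v:ℝ) * gaussianPDFReal 0 v y)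
      (y * gaussianPDFReal 0 v y) y := by
    intro y _
    simp only [gaussianPDFReal, sub_zero]
    have h1 : HasDerivAt (fun y : ℝ => -y^2/(2*(v:ℝ))) (-y/(v:ℝ)) y := by
      have := ((hasDerivAt_pow 2 y).neg).div_const (2*(v:ℝ))
      refine this.congr_deriv ?_
      field_simp; ring
    have h3 := ((h1.exp).const_mul ((Real.sqrt (2*π*(v:ℝ)))⁻¹)).const_mul (-(v:ℝ))
    refine h3.congr_deriv ?_
    field_simp
  have hcont : ContinuousWithinAt (fun y => -(v:ℝ) * gaussianPDFReal 0 v y) (Ici t) t := by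
    apply Continuous.continuousWithinAt
    simp only [gaussianPDFReal_def]
    fun_prop
  have htend : Tendsto (fun y => -(v:ℝ) * gaussianPDFReal 0 v y) atTop (nhds 0) := by
    have h1 : Tendsto (fun y : ℝ => -y^2/(2*(v:ℝ))) atTop atBot := by
      have h2 : Tendsto (fun y : ℝ => y^2/(2*(v:ℝ))) atTop atTop :=
        (tendsto_pow_atTop two_ne_zero).atTop_div_const (by positivity)
      have : (fun y : ℝ => -y^2/(2*(v:ℝ))) = fun y : ℝ => -(y^2/(2*(v:ℝ))) := by
        ext y; ring
      rw [this]
      exact tendsto_neg_atBot_iff.mpr h2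
    have h3 := Real.tendsto_exp_atBot.comp h1
    have h4 := h3.const_mul (-(v:ℝ) * (Real.sqrt (2*π*(v:ℝ)))⁻¹)
    simp only [mul_zero] at h4
    convert h4 using 2 with y
    simp only [gaussianPDFReal, sub_zero, Function.comp]
    ring
  have hint : IntegrableOn (fun y : ℝ => y * gaussianPDFReal 0 v y) (Ioi t) :=
    (gF5_integrable_mul_pdf hv).integrableOn
  rw [integral_Ioi_of_hasDerivAt_of_tendsto hcont hd hint htend]
  ring

lemma gF5_pdf_mul {b c : ℝ≥0} (hb : 0 < b) (hc : 0 < c) (x z : ℝ) :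
    gaussianPDFReal 0 c z * gaussianPDFReal 0 b (x + z)
      = gaussianPDFReal 0 (b + c) x
        * gaussianPDFReal (-((c:ℝ) * x / ((b:ℝ)+(c:ℝ)))) (b * c / (b + c)) z := by
  have hb' : (0:ℝ) < b := hb
  have hc' : (0:ℝ) < c := hc
  simp only [gaussianPDFReal, sub_zero, sub_neg_eq_add]
  push_cast
  have hK : (Real.sqrt (2*π*(c:ℝ)))⁻¹ * (Real.sqrt (2*π*(b:ℝ)))⁻¹
      = (Real.sqrt (2*π*((b:ℝ)+c)))⁻¹
        * (Real.sqrt (2*π*((b:ℝ)*c/((b:ℝ)+c))))⁻¹ := by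
    rw [← mul_inv, ← mul_inv, ← Real.sqrt_mul (by positivity), ← Real.sqrt_mul (by positivity)]
    congr 1
    field_simp
  have hE : Real.exp (-z^2/(2*(c:ℝ))) * Real.exp (-(x+z)^2/(2*(b:ℝ)))
      = Real.exp (-x^2/(2*((b:ℝ)+c)))
        * Real.exp (-(z + (c:ℝ)*x/((b:ℝ)+c))^2/(2*((b:ℝ)*c/((b:ℝ)+c)))) := by
    rw [← Real.exp_add, ← Real.exp_add]
    congr 1
    field_simp
    ring
  calc (Real.sqrt (2*π*(c:ℝ)))⁻¹ * Real.exp (-z^2/(2*(c:ℝ)))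
        * ((Real.sqrt (2*π*(b:ℝ)))⁻¹ * Real.exp (-(x+z)^2/(2*(b:ℝ))))
      = ((Real.sqrt (2*π*(c:ℝ)))⁻¹ * (Real.sqrt (2*π*(b:ℝ)))⁻¹)
        * (Real.exp (-z^2/(2*(c:ℝ))) * Real.exp (-(x+z)^2/(2*(b:ℝ)))) := by ring
    _ = ((Real.sqrt (2*π*((b:ℝ)+c)))⁻¹ * (Real.sqrt (2*π*((b:ℝ)*c/((b:ℝ)+c))))⁻¹)
        * (Real.exp (-x^2/(2*((b:ℝ)+c)))
          * Real.exp (-(z + (c:ℝ)*x/((b:ℝ)+c))^2/(2*((b:ℝ)*c/((b:ℝ)+c))))) := by rw [hK, hE]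
    _ = _ := by ring

lemma gF5_conv {b c : ℝ≥0} (hb : 0 < b) (hc : 0 < c) (x : ℝ) :
    ∫ z : ℝ, gaussianPDFReal 0 c z * gaussianPDFReal 0 b (x + z)
      = gaussianPDFReal 0 (b + c) x := by
  simp_rw [gF5_pdf_mul hb hc x]
  rw [integral_const_mul, integral_gaussianPDFReal_eq_one _
    (div_pos (mul_pos hb hc) (by positivity)).ne', mul_one]

end GaussianF5Helpers

theorem gaussian_F5_moment (a b c : ℝ≥0) (ha : 0 < a) (hb : 0 < b) (hc : 0 < c) :
    ∫ q : ℝ × ℝ × ℝ,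
        q.1 * q.2.1 * (if 0 ≤ q.1 then (1:ℝ) else 0) *
          (if 0 ≤ q.1 + q.2.1 + q.2.2 then (1:ℝ) else 0)
        ∂((gaussianReal 0 a).prod ((gaussianReal 0 b).prod (gaussianReal 0 c)))
      = (b : ℝ) * Real.sqrt ((a : ℝ) * ((b : ℝ) + (c : ℝ))) /
          (2 * Real.pi * ((a : ℝ) + (b : ℝ) + (c : ℝ))) := by
  have ha' : (0:ℝ) < a := ha
  have hb' : (0:ℝ) < b := hb
  have hc' : (0:ℝ) < c := hc
  -- basic integrability facts
  have hIbc : Integrable (fun p : ℝ × ℝ => p.1)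
      ((gaussianReal 0 b).prod (gaussianReal 0 c)) := by
    simpa using (gF5_integrable_id hb).mul_prod (integrable_const (1:ℝ))
  -- integrability of the full integrand
  have hmF : AEStronglyMeasurable
      (fun q : ℝ × ℝ × ℝ => q.1 * q.2.1 * (if 0 ≤ q.1 then (1:ℝ) else 0) *
        (if 0 ≤ q.1 + q.2.1 + q.2.2 then (1:ℝ) else 0))
      (((gaussianReal 0 a).prod ((gaussianReal 0 b).prod (gaussianReal 0 c)))) := by
    have m1 : Measurable fun q : ℝ × ℝ × ℝ => (if 0 ≤ q.1 then (1:ℝ) else 0) :=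
      Measurable.ite (measurableSet_le measurable_const measurable_fst)
        measurable_const measurable_const
    have m2 : Measurable fun q : ℝ × ℝ × ℝ => (if 0 ≤ q.1 + q.2.1 + q.2.2 then (1:ℝ) else 0) :=
      Measurable.ite (measurableSet_le measurable_const
        ((measurable_fst.add (measurable_fst.comp measurable_snd)).add
          (measurable_snd.comp measurable_snd)))
        measurable_const measurable_const
    exact (((measurable_fst.mul (measurable_fst.comp measurable_snd)).mul m1).mul
      m2).aestronglyMeasurable
  have hboundF : ∀ q : ℝ × ℝ × ℝ,
      ‖q.1 * q.2.1 * (if 0 ≤ q.1 then (1:ℝ) else 0) *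
        (if 0 ≤ q.1 + q.2.1 + q.2.2 then (1:ℝ) else 0)‖ ≤ |q.1| * |q.2.1| := by
    intro q
    rw [Real.norm_eq_abs, abs_mul, abs_mul, abs_mul]
    have e1 : |(if 0 ≤ q.1 then (1:ℝ) else 0)| ≤ 1 := by split <;> simp
    have e2 : |(if 0 ≤ q.1 + q.2.1 + q.2.2 then (1:ℝ) else 0)| ≤ 1 := by split <;> simp
    calc |q.1| * |q.2.1| * |(if 0 ≤ q.1 then (1:ℝ) else 0)| *
          |(if 0 ≤ q.1 + q.2.1 + q.2.2 then (1:ℝ) else 0)|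
        ≤ |q.1| * |q.2.1| * 1 * 1 := by gcongr <;> positivity
      _ = |q.1| * |q.2.1| := by ring
  have hF : Integrable
      (fun q : ℝ × ℝ × ℝ => q.1 * q.2.1 * (if 0 ≤ q.1 then (1:ℝ) else 0) *
        (if 0 ≤ q.1 + q.2.1 + q.2.2 then (1:ℝ) else 0))
      (((gaussianReal 0 a).prod ((gaussianReal 0 b).prod (gaussianReal 0 c)))) := by
    refine Integrable.mono' ?_ hmF (ae_of_all _ hboundF)
    exact ((gF5_integrable_id ha).abs).mul_prod hIbc.abs
  rw [integral_prod _ hF]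
  -- key pointwise inner computation
  have key : ∀ x : ℝ,
      (∫ p : ℝ × ℝ, x * p.1 * (if 0 ≤ x then (1:ℝ) else 0) *
          (if 0 ≤ x + p.1 + p.2 then (1:ℝ) else 0)
        ∂((gaussianReal 0 b).prod (gaussianReal 0 c)))
      = x * (if 0 ≤ x then (1:ℝ) else 0) * ((b:ℝ) * gaussianPDFReal 0 (b+c) x) := by
    intro x
    have hsec : Integrable (fun p : ℝ × ℝ => x * p.1 * (if 0 ≤ x then (1:ℝ) else 0) *
        (if 0 ≤ x + p.1 + p.2 then (1:ℝ) else 0))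
        ((gaussianReal 0 b).prod (gaussianReal 0 c)) := by
      refine Integrable.mono' (hIbc.abs.const_mul |x|) ?_ (ae_of_all _ ?_)
      · have m2 : Measurable fun p : ℝ × ℝ => (if 0 ≤ x + p.1 + p.2 then (1:ℝ) else 0) :=
          Measurable.ite (measurableSet_le measurable_const
            ((measurable_const.add measurable_fst).add measurable_snd))
            measurable_const measurable_const
        exact (((measurable_const.mul measurable_fst).mul measurable_const).mul
          m2).aestronglyMeasurable
      · intro p
        rw [Real.norm_eq_abs, abs_mul, abs_mul, abs_mul]
        have e1 : |(if 0 ≤ x then (1:ℝ) else 0)| ≤ 1 := by split <;> simp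
        have e2 : |(if 0 ≤ x + p.1 + p.2 then (1:ℝ) else 0)| ≤ 1 := by split <;> simp
        calc |x| * |p.1| * |(if 0 ≤ x then (1:ℝ) else 0)| *
              |(if 0 ≤ x + p.1 + p.2 then (1:ℝ) else 0)|
            ≤ |x| * |p.1| * 1 * 1 := by gcongr <;> positivity
          _ = |x| * |p.1| := by ring
    rw [integral_prod_symm _ hsec]
    have inner : ∀ z : ℝ,
        (∫ y : ℝ, x * y * (if 0 ≤ x then (1:ℝ) else 0) *
            (if 0 ≤ x + y + z then (1:ℝ) else 0) ∂(gaussianReal 0 b))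
        = x * (if 0 ≤ x then (1:ℝ) else 0) * ((b:ℝ) * gaussianPDFReal 0 b (x + z)) := by
      intro z
      rw [gF5_integral_gaussianReal hb.ne']
      have e : (fun y : ℝ => gaussianPDFReal 0 b y * (x * y * (if 0 ≤ x then (1:ℝ) else 0) *
            (if 0 ≤ x + y + z then (1:ℝ) else 0)))
          = fun y => (x * (if 0 ≤ x then (1:ℝ) else 0)) *
              (Set.indicator (Ici (-(x+z))) (fun y => y * gaussianPDFReal 0 b y) y) := by
        ext y
        simp only [Set.indicator_apply, Set.mem_Ici]
        by_cases h : 0 ≤ x + y + z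
        · rw [if_pos h, if_pos (show -(x+z) ≤ y by linarith)]; ring
        · rw [if_neg h, if_neg (show ¬(-(x+z) ≤ y) from fun hy => h (by linarith))]
          ring
      rw [e, integral_const_mul, integral_indicator measurableSet_Ici, gF5_intB hb,
        gF5_pdf_even]
    simp only [inner]
    rw [gF5_integral_gaussianReal hc.ne']
    have e2 : (fun z : ℝ => gaussianPDFReal 0 c z *
          (x * (if 0 ≤ x then (1:ℝ) else 0) * ((b:ℝ) * gaussianPDFReal 0 b (x + z))))
        = fun z => (x * (if 0 ≤ x then (1:ℝ) else 0) * (b:ℝ)) *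
            (gaussianPDFReal 0 c z * gaussianPDFReal 0 b (x + z)) := by
      ext z; ring
    rw [e2, integral_const_mul, gF5_conv hb hc]
    ring
  simp only [key]
  rw [gF5_integral_gaussianReal ha.ne']
  -- final one-dimensional integral
  have hσ : (0:ℝ≥0) < (b+c)*a/((b+c)+a) :=
    div_pos (mul_pos (add_pos hb hc) ha) (by positivity)
  have hprod : ∀ x : ℝ, gaussianPDFReal 0 a x * gaussianPDFReal 0 (b+c) x
      = gaussianPDFReal 0 ((b+c)+a) 0 * gaussianPDFReal 0 ((b+c)*a/((b+c)+a)) x := by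
    intro x
    have h := gF5_pdf_mul (b := b+c) (c := a) (add_pos hb hc) ha 0 x
    simpa using h
  have e3 : (fun x : ℝ => gaussianPDFReal 0 a x * (x * (if 0 ≤ x then (1:ℝ) else 0) *
        ((b:ℝ) * gaussianPDFReal 0 (b+c) x)))
      = fun x => ((b:ℝ) * gaussianPDFReal 0 ((b+c)+a) 0) *
          (Set.indicator (Ici (0:ℝ))
            (fun x => x * gaussianPDFReal 0 ((b+c)*a/((b+c)+a)) x) x) := by
    ext x
    simp only [Set.indicator_apply, Set.mem_Ici]
    by_cases h : (0:ℝ) ≤ x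
    · simp only [h, if_true]
      linear_combination ((b:ℝ) * x) * hprod x
    · simp only [h, if_false]
      ring
  rw [e3, integral_const_mul, integral_indicator measurableSet_Ici, gF5_intB hσ]
  -- arithmetic cleanup
  simp only [gaussianPDFReal, sub_zero, ne_eq, OfNat.ofNat_ne_zero, not_false_eq_true,
    zero_pow, neg_zero, zero_div, Real.exp_zero, mul_one]
  push_cast
  set A := (a:ℝ); set B := (b:ℝ); set C := (c:ℝ)
  have hS : (0:ℝ) < B + C + A := by positivity
  have hσ' : (0:ℝ) < (B+C)*A/((B+C)+A) := by positivity
  have h1 : Real.sqrt (2*π*((B+C)+A)) * Real.sqrt (2*π*((B+C)*A/((B+C)+A)))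
      = 2*π*Real.sqrt (A*(B+C)) := by
    rw [← Real.sqrt_mul (by positivity)]
    rw [show (2*π*((B+C)+A))*(2*π*((B+C)*A/((B+C)+A))) = (2*π)^2 * (A*(B+C)) by
      field_simp]
    rw [Real.sqrt_mul (by positivity), Real.sqrt_sq (by positivity)]
  have h2 : Real.sqrt (A*(B+C)) * Real.sqrt (A*(B+C)) = A*(B+C) :=
    Real.mul_self_sqrt (by positivity)
  have hs1 : (0:ℝ) < Real.sqrt (2*π*((B+C)+A)) := Real.sqrt_pos.mpr (by positivity)
  have hs2 : (0:ℝ) < Real.sqrt (2*π*((B+C)*A/((B+C)+A))) := Real.sqrt_pos.mpr (by positivity)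
  have hs3 : (0:ℝ) < Real.sqrt (A*(B+C)) := Real.sqrt_pos.mpr (by positivity)
  have e5 : (B:ℝ) * (Real.sqrt (2*π*(B+C+A)))⁻¹ *
      ((B+C)*A/(B+C+A) * (Real.sqrt (2*π*((B+C)*A/(B+C+A))))⁻¹)
      = B * ((B+C)*A/(B+C+A)) /
        (Real.sqrt (2*π*(B+C+A)) * Real.sqrt (2*π*((B+C)*A/(B+C+A)))) := by
    field_simp
  rw [e5, h1]
  rw [show (B+C)*A = Real.sqrt (A*(B+C)) * Real.sqrt (A*(B+C)) from by rw [h2]; ring]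
  rw [div_eq_div_iff (by positivity) (by positivity)]
  field_simp
  ring
end

section
/- Let x₁ ~ N(0,a) and x₂ ~ N(0,b) be independent centered Gaussians and σ the Leaky ReLU with slope κ ∈ [0,1). Then E[x₂·σ(x₁)·σ'(x₁+x₂)] = (1−κ)²·b·√(ab)/(2π(a+b)). -/
open MeasureTheory ProbabilityTheory Real Set Filter
open scoped NNReal ENNReal

lemma aux_ftc {c : ℝ} (hc : 0 < c) (t : ℝ) :
    ∫ x in Ioi t, x * Real.exp (-c * x ^ 2) = Real.exp (-c * t ^ 2) / (2 * c) := by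
  have hderiv : ∀ x ∈ Ici t, HasDerivAt (fun x => -Real.exp (-c * x ^ 2) / (2 * c))
      (x * Real.exp (-c * x ^ 2)) x := by
    intro x _
    have h1 : HasDerivAt (fun x : ℝ => -c * x ^ 2) (-c * (2 * x)) x := by
      simpa using (hasDerivAt_pow 2 x).const_mul (-c)
    have h3 : HasDerivAt (fun x => -Real.exp (-c * x ^ 2) / (2 * c))
        (-(Real.exp (-c * x ^ 2) * (-c * (2 * x))) / (2 * c)) x := (h1.exp.neg.div_const (2 * c))
    convert h3 using 1
    rw [eq_div_iff (by positivity)]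
    ring
  have hint : IntegrableOn (fun x => x * Real.exp (-c * x ^ 2)) (Ioi t) :=
    (integrable_mul_exp_neg_mul_sq hc).integrableOn
  have h0 : Tendsto (fun x : ℝ => c * x ^ 2) atTop atTop :=
    (tendsto_pow_atTop two_ne_zero).const_mul_atTop hc
  have h1 : Tendsto (fun x : ℝ => -c * x ^ 2) atTop atBot := by
    simp only [neg_mul]; exact tendsto_neg_atTop_atBot.comp h0
  have htend : Tendsto (fun x : ℝ => -Real.exp (-c * x ^ 2) / (2 * c)) atTop (nhds 0) := by
    have := (Real.tendsto_exp_atBot.comp h1).neg.div_const (2 * c)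
    simpa using this
  rw [integral_Ioi_of_hasDerivAt_of_tendsto' hderiv hint htend]
  field_simp
  ring

lemma aux_odd {c : ℝ} (hc : 0 < c) :
    ∫ x : ℝ, x * Real.exp (-c * x ^ 2) = 0 := by
  have hi := integrable_mul_exp_neg_mul_sq hc
  have hIic : ∫ x in Iic (0:ℝ), x * Real.exp (-c * x ^ 2)
      = -(Real.exp (-c * 0 ^ 2) / (2 * c)) := by
    have h := integral_comp_neg_Iic (0:ℝ) (fun x => x * Real.exp (-c * x ^ 2))
    simp only [neg_zero] at h
    have h2 : ∫ x in Iic (0:ℝ), (-x) * Real.exp (-c * (-x) ^ 2)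
        = -∫ x in Iic (0:ℝ), x * Real.exp (-c * x ^ 2) := by
      rw [← integral_neg]
      congr 1; funext x; ring_nf
    rw [h2, aux_ftc hc 0] at h
    linarith
  have := intervalIntegral.integral_Iic_add_Ioi (hi.integrableOn (s := Iic 0)) (hi.integrableOn (s := Ioi 0))
  rw [hIic, aux_ftc hc 0] at this
  linarith

lemma gauss_integral_eq {v : ℝ≥0} (hv : v ≠ 0) (g : ℝ → ℝ) :
    ∫ x, g x ∂(gaussianReal 0 v) = ∫ x, gaussianPDFReal 0 v x * g x := by
  rw [gaussianReal_of_var_ne_zero 0 hv]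
  have hd : gaussianPDF 0 v = fun x => ((gaussianPDFReal 0 v x).toNNReal : ℝ≥0∞) :=
    rfl
  rw [hd, integral_withDensity_eq_integral_smul ((measurable_gaussianPDFReal 0 v).real_toNNReal) g]
  congr 1
  funext x
  simp [NNReal.smul_def, Real.coe_toNNReal _ (gaussianPDFReal_nonneg 0 v x)]

lemma gauss_integrable_iff {v : ℝ≥0} (hv : v ≠ 0) (g : ℝ → ℝ) :
    Integrable g (gaussianReal 0 v) ↔
      Integrable (fun x => gaussianPDFReal 0 v x * g x) volume := by
  rw [gaussianReal_of_var_ne_zero 0 hv]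
  have hd : gaussianPDF 0 v = fun x => ((gaussianPDFReal 0 v x).toNNReal : ℝ≥0∞) :=
    rfl
  rw [hd, integrable_withDensity_iff_integrable_coe_smul
    ((measurable_gaussianPDFReal 0 v).real_toNNReal)]
  constructor <;> intro h <;> refine h.congr (Filter.Eventually.of_forall fun x => ?_) <;>
    simp [NNReal.smul_def, Real.coe_toNNReal _ (gaussianPDFReal_nonneg 0 v x)]

lemma pdf_mul_id {v : ℝ≥0} (hv : v ≠ 0) (x : ℝ) :
    gaussianPDFReal 0 v x * x
      = (Real.sqrt (2 * π * v))⁻¹ * (x * Real.exp (-(2 * (v:ℝ))⁻¹ * x ^ 2)) := by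
  have hv' : (0:ℝ) < v := lt_of_le_of_ne v.coe_nonneg (by exact_mod_cast (Ne.symm hv))
  rw [gaussianPDFReal]
  rw [show (-(x - 0) ^ 2 / (2 * (v:ℝ))) = -(2 * (v:ℝ))⁻¹ * x ^ 2 by field_simp; ring]
  ring

lemma gauss_integrable_id {v : ℝ≥0} (hv : v ≠ 0) :
    Integrable (fun x : ℝ => x) (gaussianReal 0 v) := by
  rw [gauss_integrable_iff hv]
  have hv' : (0:ℝ) < v := lt_of_le_of_ne v.coe_nonneg (by exact_mod_cast (Ne.symm hv))
  have hc : (0:ℝ) < (2 * (v:ℝ))⁻¹ := by positivity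
  have := ((integrable_mul_exp_neg_mul_sq hc).const_mul (Real.sqrt (2 * π * v))⁻¹)
  exact this.congr (Filter.Eventually.of_forall fun x => (pdf_mul_id hv x).symm)

lemma gauss_mean_zero {v : ℝ≥0} (hv : v ≠ 0) :
    ∫ x, x ∂(gaussianReal 0 v) = 0 := by
  rw [gauss_integral_eq hv]
  have hv' : (0:ℝ) < v := lt_of_le_of_ne v.coe_nonneg (by exact_mod_cast (Ne.symm hv))
  have hc : (0:ℝ) < (2 * (v:ℝ))⁻¹ := by positivity
  simp_rw [pdf_mul_id hv]
  rw [integral_const_mul, aux_odd hc, mul_zero]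

lemma gauss_tail {v : ℝ≥0} (hv : v ≠ 0) (t : ℝ) :
    ∫ y, Set.indicator (Ici t) (fun y : ℝ => y) y ∂(gaussianReal 0 v)
      = (v : ℝ) * gaussianPDFReal 0 v t := by
  have hv' : (0:ℝ) < v := lt_of_le_of_ne v.coe_nonneg (by exact_mod_cast (Ne.symm hv))
  have hc : (0:ℝ) < (2 * (v:ℝ))⁻¹ := by positivity
  rw [gauss_integral_eq hv]
  have h1 : ∀ y, gaussianPDFReal 0 v y * Set.indicator (Ici t) (fun y : ℝ => y) y
      = Set.indicator (Ici t) (fun y => gaussianPDFReal 0 v y * y) y := by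
    intro y
    by_cases h : y ∈ Ici t <;>
      simp [Set.indicator_of_mem, Set.indicator_of_notMem, h]
  simp_rw [h1, pdf_mul_id hv]
  rw [integral_indicator measurableSet_Ici, integral_Ici_eq_integral_Ioi,
    integral_const_mul, aux_ftc hc t]
  rw [gaussianPDFReal]
  rw [show (-(t - 0) ^ 2 / (2 * (v:ℝ))) = -(2 * (v:ℝ))⁻¹ * t ^ 2 by field_simp; ring]
  field_simp

lemma pdf_even {v : ℝ≥0} (x : ℝ) :
    gaussianPDFReal 0 v (-x) = gaussianPDFReal 0 v x := by
  simp [gaussianPDFReal, sub_zero, neg_sq]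

lemma gauss_inner {v : ℝ≥0} (hv : v ≠ 0) (κ x : ℝ) :
    ∫ y, y * (if 0 ≤ x + y then (1:ℝ) else κ) ∂(gaussianReal 0 v)
      = (1 - κ) * (v : ℝ) * gaussianPDFReal 0 v (-x) := by
  have h1 : ∀ y : ℝ, y * (if 0 ≤ x + y then (1:ℝ) else κ)
      = κ * y + (1 - κ) * Set.indicator (Ici (-x)) (fun y : ℝ => y) y := by
    intro y
    by_cases h : 0 ≤ x + y
    · rw [if_pos h, Set.indicator_of_mem (by simp only [mem_Ici]; linarith)]
      ring
    · rw [if_neg h, Set.indicator_of_notMem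
        (by simp only [mem_Ici, not_le]; linarith [lt_of_not_ge h])]
      ring
  simp_rw [h1]
  rw [integral_add ((gauss_integrable_id hv).const_mul κ)
    (((gauss_integrable_id hv).indicator measurableSet_Ici).const_mul (1 - κ)),
    integral_const_mul, integral_const_mul, gauss_mean_zero hv, gauss_tail hv (-x)]
  ring

theorem gaussian_leaky_cross_moment (a b : ℝ≥0) (ha : 0 < a) (hb : 0 < b)
    (κ : ℝ) (hκ0 : 0 ≤ κ) (hκ1 : κ < 1) :
    ∫ p : ℝ × ℝ,
        p.2 * (if 0 ≤ p.1 then p.1 else κ * p.1) *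
          (if 0 ≤ p.1 + p.2 then (1:ℝ) else κ)
        ∂((gaussianReal 0 a).prod (gaussianReal 0 b))
      = (1 - κ) ^ 2 * (b : ℝ) * Real.sqrt ((a : ℝ) * (b : ℝ)) /
          (2 * Real.pi * ((a : ℝ) + (b : ℝ))) := by
  have hA : (0:ℝ) < a := ha
  have hB : (0:ℝ) < b := hb
  set A := (a:ℝ) with hAdef
  set B := (b:ℝ) with hBdef
  -- integrability over the product
  have hmeas : Measurable (fun p : ℝ × ℝ =>
      p.2 * (if 0 ≤ p.1 then p.1 else κ * p.1) * (if 0 ≤ p.1 + p.2 then (1:ℝ) else κ)) := by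
    refine (measurable_snd.mul (Measurable.ite (measurableSet_le measurable_const measurable_fst)
      measurable_fst (measurable_fst.const_mul κ))).mul (Measurable.ite (measurableSet_le
      measurable_const (measurable_fst.add measurable_snd)) measurable_const measurable_const)
  have hG : Integrable (fun p : ℝ × ℝ => |p.1| * |p.2|)
      ((gaussianReal 0 a).prod (gaussianReal 0 b)) :=
    ((gauss_integrable_id ha.ne').abs).mul_prod ((gauss_integrable_id hb.ne').abs)
  have hσ : ∀ x : ℝ, |if 0 ≤ x then x else κ * x| ≤ |x| := by
    intro x
    by_cases h : 0 ≤ x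
    · simp [h]
    · rw [if_neg h, abs_mul, abs_of_nonneg hκ0]
      nlinarith [abs_nonneg x]
  have hσ' : ∀ s : ℝ, |if 0 ≤ s then (1:ℝ) else κ| ≤ 1 := by
    intro s
    by_cases h : 0 ≤ s
    · simp [h]
    · rw [if_neg h, abs_of_nonneg hκ0]; linarith
  have hint : Integrable (fun p : ℝ × ℝ =>
      p.2 * (if 0 ≤ p.1 then p.1 else κ * p.1) * (if 0 ≤ p.1 + p.2 then (1:ℝ) else κ))
      ((gaussianReal 0 a).prod (gaussianReal 0 b)) := by
    refine hG.mono' hmeas.aestronglyMeasurable (ae_of_all _ fun p => ?_)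
    have h1 := hσ p.1
    have h2 := hσ' (p.1 + p.2)
    calc ‖p.2 * (if 0 ≤ p.1 then p.1 else κ * p.1) * (if 0 ≤ p.1 + p.2 then (1:ℝ) else κ)‖
        = |p.2| * |if 0 ≤ p.1 then p.1 else κ * p.1| * |if 0 ≤ p.1 + p.2 then (1:ℝ) else κ| := by
          rw [Real.norm_eq_abs, abs_mul, abs_mul]
      _ ≤ |p.2| * |p.1| * 1 := by gcongr
      _ = |p.1| * |p.2| := by ring
  rw [MeasureTheory.integral_prod _ hint]
  have hinner : ∀ x : ℝ, (∫ y, y * (if 0 ≤ x then x else κ * x) *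
      (if 0 ≤ x + y then (1:ℝ) else κ) ∂(gaussianReal 0 b))
      = (1 - κ) * B * ((if 0 ≤ x then x else κ * x) * gaussianPDFReal 0 b x) := by
    intro x
    have h3 : ∀ y : ℝ, y * (if 0 ≤ x then x else κ * x) * (if 0 ≤ x + y then (1:ℝ) else κ)
        = (if 0 ≤ x then x else κ * x) * (y * (if 0 ≤ x + y then (1:ℝ) else κ)) := fun y => by
      ring
    simp_rw [h3]
    rw [integral_const_mul, gauss_inner hb.ne' κ x, pdf_even]
    ring
  simp_rw [hinner]
  have h4 : ∀ x : ℝ, (1 - κ) * B * ((if 0 ≤ x then x else κ * x) * gaussianPDFReal 0 b x)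
      = ((1 - κ) * B) * ((if 0 ≤ x then x else κ * x) * gaussianPDFReal 0 b x) := fun x => rfl
  rw [integral_const_mul, gauss_integral_eq ha.ne']
  set c : ℝ := (2 * A)⁻¹ + (2 * B)⁻¹ with hcdef
  have hc : 0 < c := by positivity
  set C : ℝ := (Real.sqrt (2 * π * A))⁻¹ * (Real.sqrt (2 * π * B))⁻¹ with hCdef
  have base : ∀ x : ℝ, gaussianPDFReal 0 a x * gaussianPDFReal 0 b x
      = C * Real.exp (-c * x ^ 2) := by
    intro x
    rw [gaussianPDFReal, gaussianPDFReal, mul_mul_mul_comm, ← Real.exp_add]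
    congr 1
    rw [hcdef, ← hAdef, ← hBdef]
    field_simp
    ring
  have key : ∀ x : ℝ, gaussianPDFReal 0 a x *
      ((if 0 ≤ x then x else κ * x) * gaussianPDFReal 0 b x)
      = C * (κ * (x * Real.exp (-c * x ^ 2))
        + (1 - κ) * Set.indicator (Ici 0) (fun x => x * Real.exp (-c * x ^ 2)) x) := by
    intro x
    rw [show gaussianPDFReal 0 a x * ((if 0 ≤ x then x else κ * x) * gaussianPDFReal 0 b x)
        = (if 0 ≤ x then x else κ * x) * (gaussianPDFReal 0 a x * gaussianPDFReal 0 b x) from by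
      ring, base x]
    by_cases h : 0 ≤ x
    · rw [if_pos h, Set.indicator_of_mem (by exact h)]
      ring
    · rw [if_neg h, Set.indicator_of_notMem (by simpa using h)]
      ring
  simp_rw [key]
  rw [integral_const_mul,
    integral_add ((integrable_mul_exp_neg_mul_sq hc).const_mul κ)
      (((integrable_mul_exp_neg_mul_sq hc).indicator measurableSet_Ici).const_mul (1 - κ)),
    integral_const_mul, integral_const_mul, aux_odd hc,
    integral_indicator measurableSet_Ici, integral_Ici_eq_integral_Ioi, aux_ftc hc 0]
  -- final arithmetic
  have hs : Real.sqrt (2 * π * A) * Real.sqrt (2 * π * B) = 2 * π * Real.sqrt (A * B) := by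
    rw [← Real.sqrt_mul (by positivity)]
    rw [show 2 * π * A * (2 * π * B) = (2 * π) ^ 2 * (A * B) by ring,
      Real.sqrt_mul (by positivity), Real.sqrt_sq (by positivity)]
  have hC2 : C = (2 * π * Real.sqrt (A * B))⁻¹ := by
    rw [hCdef, ← mul_inv, hs]
  have hss : Real.sqrt (A * B) * Real.sqrt (A * B) = A * B :=
    Real.mul_self_sqrt (by positivity)
  have hsABpos : 0 < Real.sqrt (A * B) := Real.sqrt_pos.2 (by positivity)
  rw [hC2]
  have hcval : c = (A + B) / (2 * A * B) := by
    rw [hcdef]; field_simp; ring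
  rw [hcval]
  have hπ : 0 < π := Real.pi_pos
  have hab : Real.sqrt A * Real.sqrt B * (Real.sqrt A * Real.sqrt B) = A * B := by
    rw [← Real.sqrt_mul hA.le]; exact hss
  field_simp
  have e3 : Real.sqrt (B * A) ^ 2 = B * A := Real.sq_sqrt (by positivity)
  rw [e3]
  simp only [pow_two, mul_zero, zero_mul, zero_div, neg_zero, Real.exp_zero]
  ring
end
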